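/- arXiv:2503.17640 — 3 statements merged into one kernel-verified Lean document; each statement's English description precedes it below -/
import Mathlib

section
/- Let S : [t₀,t₁] × ℝⁿ → ℝ be C^{1,2}, λ > 0, and define φ := exp(S/λ). Suppose S satisfies the dual (HJB-type) PDE ∂S/∂t + ⟨∇S, f⟩ + (1/2)⟨∇S, ggᵀ∇S⟩ + (1/2)⟨Σ, Hess S⟩ = q. Then φ satisfies ∂φ/∂t + ⟨∇φ, f⟩ + (1/2)⟨Σ, Hess φ⟩ − qφ/λ + (1/2)⟨∇φ, (λggᵀ − Σ)∇log φ⟩ = 0. -/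
open scoped BigOperators Matrix

/-- Spatial partial derivative in the `i`-th coordinate direction. -/
noncomputable def pd {n : ℕ} (i : Fin n) (f : (Fin n → ℝ) → ℝ) (x : Fin n → ℝ) : ℝ :=
  fderiv ℝ f x (Pi.single i 1)

lemma hasFDerivAt_exp_div {n : ℕ} (S : (Fin n → ℝ) → ℝ) (hS : Differentiable ℝ S)
    (l : ℝ) (x : Fin n → ℝ) :
    HasFDerivAt (fun y => Real.exp (S y / l))
      ((Real.exp (S x / l) * l⁻¹) • fderiv ℝ S x) x := by
  have h1 : HasFDerivAt (fun y => S y / l) (l⁻¹ • fderiv ℝ S x) x := by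
    simpa [div_eq_inv_mul, Pi.smul_def] using ((hS x).hasFDerivAt).const_smul l⁻¹
  have := (Real.hasDerivAt_exp (S x / l)).comp_hasFDerivAt x h1
  simpa [smul_smul, Function.comp_def] using this

lemma pd_exp_div {n : ℕ} (S : (Fin n → ℝ) → ℝ) (hS : Differentiable ℝ S)
    (l : ℝ) (i : Fin n) (x : Fin n → ℝ) :
    pd i (fun y => Real.exp (S y / l)) x = Real.exp (S x / l) / l * pd i S x := by
  unfold pd
  rw [(hasFDerivAt_exp_div S hS l x).fderiv]
  simp [div_eq_mul_inv]

lemma pd_div_const {n : ℕ} (S : (Fin n → ℝ) → ℝ) (hS : Differentiable ℝ S)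
    (l : ℝ) (j : Fin n) (x : Fin n → ℝ) :
    pd j (fun y => S y / l) x = l⁻¹ * pd j S x := by
  unfold pd
  have h : HasFDerivAt (fun y => S y / l) (l⁻¹ • fderiv ℝ S x) x := by
    simpa [div_eq_inv_mul, Pi.smul_def] using ((hS x).hasFDerivAt).const_smul l⁻¹
  rw [h.fderiv]; simp

lemma pd_contDiff {n : ℕ} (S : (Fin n → ℝ) → ℝ) (hS : ContDiff ℝ 2 S) (j : Fin n) :
    ContDiff ℝ 1 (fun y => pd j S y) := by
  exact ContDiff.clm_apply (g := fun _ => Pi.single j 1)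
    (hS.fderiv_right (by norm_num)) contDiff_const

lemma pd_pd_exp_div {n : ℕ} (S : (Fin n → ℝ) → ℝ) (hS : ContDiff ℝ 2 S)
    (l : ℝ) (i j : Fin n) (x : Fin n → ℝ) :
    pd i (pd j (fun y => Real.exp (S y / l))) x
      = Real.exp (S x / l) / l * pd i (pd j S) x
        + Real.exp (S x / l) / l ^ 2 * pd i S x * pd j S x := by
  have hSd : Differentiable ℝ S := hS.differentiable (by norm_num)
  have hfun : (pd j (fun y => Real.exp (S y / l)))
      = fun y => Real.exp (S y / l) / l * pd j S y := by
    funext y; exact pd_exp_div S hSd l j y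
  rw [hfun]
  have h1 : HasFDerivAt (fun y => Real.exp (S y / l) / l)
      ((Real.exp (S x / l) * l⁻¹ * l⁻¹) • fderiv ℝ S x) x := by
    have := (hasFDerivAt_exp_div S hSd l x).const_smul l⁻¹
    simpa [div_eq_inv_mul, smul_smul, mul_comm, mul_assoc, mul_left_comm, Pi.smul_def] using this
  have h2 : HasFDerivAt (fun y => pd j S y) (fderiv ℝ (fun y => pd j S y) x) x :=
    (((pd_contDiff S hS j).differentiable one_ne_zero) x).hasFDerivAt
  have hm := h1.mul h2
  show (fderiv ℝ (fun y => Real.exp (S y / l) / l * pd j S y) x) (Pi.single i 1) = _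
  rw [(show HasFDerivAt (fun y => Real.exp (S y / l) / l * pd j S y) _ x from hm).fderiv]
  simp [pd, div_eq_mul_inv]
  ring_nf
  rfl

/-- If `S` satisfies the dual HJB-type PDE, then `φ = e^{S/λ}` satisfies the
semi-transformed backward equation. -/
theorem hjb_to_phi_pde {n m : ℕ} (t₀ t₁ : ℝ)
    (S : ℝ → (Fin n → ℝ) → ℝ)
    (f : ℝ → (Fin n → ℝ) → Fin n → ℝ)
    (g : ℝ → (Fin n → ℝ) → Matrix (Fin n) (Fin m) ℝ)
    (Sig : ℝ → (Fin n → ℝ) → Matrix (Fin n) (Fin n) ℝ)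
    (q : ℝ → (Fin n → ℝ) → ℝ)
    (l : ℝ) (hl : 0 < l)
    (hSx : ∀ t, ContDiff ℝ 2 (S t))
    (hSt : ∀ x, ContDiff ℝ 1 (fun t => S t x))
    (hHJB : ∀ t ∈ Set.Icc t₀ t₁, ∀ x,
      deriv (fun τ => S τ x) t
        + (fun i => pd i (S t) x) ⬝ᵥ f t x
        + (1 / 2 : ℝ) * ((fun i => pd i (S t) x) ⬝ᵥ
            (g t x * (g t x).transpose).mulVec (fun j => pd j (S t) x))
        + (1 / 2 : ℝ) * (∑ i, ∑ j, Sig t x i j * pd i (pd j (S t)) x)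
        = q t x) :
    ∀ t ∈ Set.Icc t₀ t₁, ∀ x,
      deriv (fun τ => Real.exp (S τ x / l)) t
        + (fun i => pd i (fun y => Real.exp (S t y / l)) x) ⬝ᵥ f t x
        + (1 / 2 : ℝ) * (∑ i, ∑ j, Sig t x i j *
            pd i (pd j (fun y => Real.exp (S t y / l))) x)
        - q t x * Real.exp (S t x / l) / l
        + (1 / 2 : ℝ) * ((fun i => pd i (fun y => Real.exp (S t y / l)) x) ⬝ᵥ
            (l • (g t x * (g t x).transpose) - Sig t x).mulVec
              (fun j => pd j (fun y => Real.log (Real.exp (S t y / l))) x))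
        = 0 := by
  intro t ht x
  have hSd : Differentiable ℝ (S t) := (hSx t).differentiable (by norm_num)
  set E := Real.exp (S t x / l) with hE
  -- time derivative
  have hder : HasDerivAt (fun τ => S τ x) (deriv (fun τ => S τ x) t) t :=
    (((hSt x).differentiable one_ne_zero) t).hasDerivAt
  have ht' : deriv (fun τ => Real.exp (S τ x / l)) t
      = E * (deriv (fun τ => S τ x) t / l) :=
    by have h := (Real.hasDerivAt_exp (S t x / l)).comp t (hder.div_const l); exact h.deriv
  -- log simplification
  have hlogfun : (fun y => Real.log (Real.exp (S t y / l))) = fun y => S t y / l := by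
    funext y; exact Real.log_exp _
  rw [ht', hlogfun]
  simp only [pd_exp_div (S t) hSd l, pd_pd_exp_div (S t) (hSx t) l,
    pd_div_const (S t) hSd l]
  -- algebraic identities
  have e1 : (fun i => E / l * pd i (S t) x) ⬝ᵥ f t x
      = E / l * ((fun i => pd i (S t) x) ⬝ᵥ f t x) := by
    simp [dotProduct, Finset.mul_sum, mul_assoc]
  have e2 : (∑ i, ∑ j, Sig t x i j *
        (E / l * pd i (pd j (S t)) x + E / l ^ 2 * pd i (S t) x * pd j (S t) x))
      = E / l * (∑ i, ∑ j, Sig t x i j * pd i (pd j (S t)) x)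
        + E / l ^ 2 * ((fun i => pd i (S t) x) ⬝ᵥ
            (Sig t x).mulVec (fun j => pd j (S t) x)) := by
    simp only [dotProduct, Matrix.mulVec, Finset.mul_sum, ← Finset.sum_add_distrib]
    refine Finset.sum_congr rfl fun i _ => ?_
    refine Finset.sum_congr rfl fun j _ => ?_
    ring
  have e3 : (fun i => E / l * pd i (S t) x) ⬝ᵥ
        ((l • (g t x * (g t x).transpose) - Sig t x).mulVec
          (fun j => l⁻¹ * pd j (S t) x))
      = E / l * ((fun i => pd i (S t) x) ⬝ᵥ
            (g t x * (g t x).transpose).mulVec (fun j => pd j (S t) x))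
        - E / l ^ 2 * ((fun i => pd i (S t) x) ⬝ᵥ
            (Sig t x).mulVec (fun j => pd j (S t) x)) := by
    simp only [dotProduct, Matrix.mulVec, Matrix.sub_apply, Matrix.smul_apply,
      smul_eq_mul, Finset.mul_sum, ← Finset.sum_sub_distrib]
    refine Finset.sum_congr rfl fun i _ => ?_
    refine Finset.sum_congr rfl fun j _ => ?_
    field_simp
  rw [e1, e2, e3]
  have h := hHJB t ht x
  have hl' : l ≠ 0 := ne_of_gt hl
  linear_combination (E / l) * h
end

section
/- Let S : [t₀,t₁] × ℝⁿ → ℝ be C^{1,2}, λ > 0, φ := exp(S/λ). If S solves ∂S/∂t + ⟨∇S, f⟩ + (1/2)⟨∇S, ggᵀ∇S⟩ + (1/2)⟨Σ, Hess S⟩ = q, then φ solves the backward advection-diffusion-reaction PDE ∂φ/∂t + ⟨∇φ, f + f_φ⟩ + (1/2)⟨Σ, Hess φ⟩ − (q/λ + q_φ)φ = 0, where f_φ := (λggᵀ − Σ)∇log φ and q_φ := (1/2)(∇log φ)ᵀ(λggᵀ − Σ)∇log φ. -/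
open scoped BigOperators Matrix

lemma aux_alg {n : ℕ} (E l D qv : ℝ) (hl : l ≠ 0)
    (a fv : Fin n → ℝ) (G Sg : Matrix (Fin n) (Fin n) ℝ) (H : Fin n → Fin n → ℝ)
    (h : D + a ⬝ᵥ fv + (1/2 : ℝ) * (a ⬝ᵥ G.mulVec a)
        + (1/2 : ℝ) * (∑ i, ∑ j, Sg i j * H i j) = qv) :
    E * (D / l)
      + (fun i => E / l * a i) ⬝ᵥ (fun i => fv i + ((l • G - Sg).mulVec (fun j => a j / l)) i)
      + (1/2 : ℝ) * (∑ i, ∑ j, Sg i j * (E / l * a i / l * a j + E / l * H i j))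
      - (qv / l + (1/2 : ℝ) * ((fun j => a j / l) ⬝ᵥ (l • G - Sg).mulVec (fun j => a j / l))) * E
      = 0 := by
  have hs1 : (fun i => E / l * a i) = (E / l) • a := rfl
  have hs2 : (fun j => a j / l) = l⁻¹ • a := funext fun j => div_eq_inv_mul _ _
  have e2 : (∑ i, ∑ j, Sg i j * (E / l * a i / l * a j + E / l * H i j))
      = (E / l / l) * (a ⬝ᵥ Sg.mulVec a) + (E / l) * (∑ i, ∑ j, Sg i j * H i j) := by
    simp only [dotProduct, Matrix.mulVec, Finset.mul_sum, ← Finset.sum_add_distrib]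
    exact Finset.sum_congr rfl fun i _ => Finset.sum_congr rfl fun j _ => by ring
  have hadd : (fun i => fv i + ((l • G - Sg).mulVec (fun j => a j / l)) i)
      = fv + (l • G - Sg).mulVec (fun j => a j / l) := rfl
  rw [hadd, hs1, hs2, e2]
  simp only [smul_dotProduct, dotProduct_add, dotProduct_sub,
    Matrix.sub_mulVec, Matrix.mulVec_smul, Matrix.smul_mulVec, dotProduct_smul,
    smul_eq_mul]
  have hll : l * l⁻¹ = 1 := mul_inv_cancel₀ hl
  linear_combination (E / l) * h + (a ⬝ᵥ Matrix.mulVec G a * E * l⁻¹ / 2) * hll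

/-- If `S` solves the dual HJB-type PDE, then `φ = e^{S/λ}` solves the backward
advection-diffusion-reaction PDE with excess drift `f_φ` and excess reaction `q_φ`. -/
theorem hjb_to_backward_adr_pde {n m : ℕ} (t₀ t₁ : ℝ)
    (S : ℝ → (Fin n → ℝ) → ℝ)
    (f : ℝ → (Fin n → ℝ) → Fin n → ℝ)
    (g : ℝ → (Fin n → ℝ) → Matrix (Fin n) (Fin m) ℝ)
    (Sig : ℝ → (Fin n → ℝ) → Matrix (Fin n) (Fin n) ℝ)
    (q : ℝ → (Fin n → ℝ) → ℝ)
    (l : ℝ) (hl : 0 < l)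
    (hSx : ∀ t, ContDiff ℝ 2 (S t))
    (hSt : ∀ x, ContDiff ℝ 1 (fun t => S t x))
    (hHJB : ∀ t ∈ Set.Icc t₀ t₁, ∀ x,
      deriv (fun τ => S τ x) t
        + (fun i => pd i (S t) x) ⬝ᵥ f t x
        + (1 / 2 : ℝ) * ((fun i => pd i (S t) x) ⬝ᵥ
            (g t x * (g t x).transpose).mulVec (fun j => pd j (S t) x))
        + (1 / 2 : ℝ) * (∑ i, ∑ j, Sig t x i j * pd i (pd j (S t)) x)
        = q t x) :
    ∀ t ∈ Set.Icc t₀ t₁, ∀ x,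
      -- gradient of log φ (the score)
      (fun gradlog f_φ q_φ =>
        deriv (fun τ => Real.exp (S τ x / l)) t
          + (fun i => pd i (fun y => Real.exp (S t y / l)) x) ⬝ᵥ (fun i => f t x i + f_φ i)
          + (1 / 2 : ℝ) * (∑ i, ∑ j, Sig t x i j *
              pd i (pd j (fun y => Real.exp (S t y / l))) x)
          - (q t x / l + q_φ) * Real.exp (S t x / l)
          = 0)
      (fun j => pd j (fun y => Real.log (Real.exp (S t y / l))) x)
      ((l • (g t x * (g t x).transpose) - Sig t x).mulVec
        (fun j => pd j (fun y => Real.log (Real.exp (S t y / l))) x))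
      ((1 / 2 : ℝ) * ((fun j => pd j (fun y => Real.log (Real.exp (S t y / l))) x) ⬝ᵥ
        (l • (g t x * (g t x).transpose) - Sig t x).mulVec
          (fun j => pd j (fun y => Real.log (Real.exp (S t y / l))) x))) := by
  intro t ht x
  have hl0 : l ≠ 0 := ne_of_gt hl
  have hSd : Differentiable ℝ (S t) := (hSx t).differentiable two_ne_zero
  -- first derivative of exp(S/l)
  have hasD : ∀ y : Fin n → ℝ, HasFDerivAt (fun z => Real.exp (S t z / l))
      (Real.exp (S t y / l) • (l⁻¹ • fderiv ℝ (S t) y)) y := by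
    intro y
    have h1 : HasFDerivAt (fun z => S t z / l) (l⁻¹ • fderiv ℝ (S t) y) y := by
      simpa [div_eq_mul_inv, smul_smul, mul_comm] using ((hSd y).hasFDerivAt.mul_const l⁻¹)
    exact h1.exp
  have hB : ∀ (y : Fin n → ℝ) i, pd i (fun z => Real.exp (S t z / l)) y
      = Real.exp (S t y / l) / l * pd i (S t) y := by
    intro y i
    simp only [pd, (hasD y).fderiv, ContinuousLinearMap.smul_apply, smul_eq_mul]
    ring
  -- differentiability of the first partials of S
  have hadiff : ∀ j : Fin n, Differentiable ℝ (fun y => fderiv ℝ (S t) y (Pi.single j 1)) := by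
    intro j
    have hf : ContDiff ℝ 1 (fun y => fderiv ℝ (S t) y) := (hSx t).fderiv_right (by norm_num)
    exact (hf.clm_apply contDiff_const).differentiable one_ne_zero
  -- the gradient of log φ is ∇S / l
  have hlog : ∀ j, pd j (fun y => Real.log (Real.exp (S t y / l))) x = pd j (S t) x / l := by
    intro j
    have hfun : (fun y : Fin n → ℝ => Real.log (Real.exp (S t y / l))) = fun y => S t y * l⁻¹ :=
      funext fun y => by rw [Real.log_exp, div_eq_mul_inv]
    rw [hfun]
    simp only [pd, fderiv_mul_const (hSd x) l⁻¹, ContinuousLinearMap.smul_apply, smul_eq_mul]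
    ring
  -- first derivative of exp(S/l)/l
  have hB' : ∀ i, pd i (fun y => Real.exp (S t y / l) / l) x
      = Real.exp (S t x / l) / l * pd i (S t) x / l := by
    intro i
    have hfun : (fun y : Fin n → ℝ => Real.exp (S t y / l) / l)
        = fun y => Real.exp (S t y / l) * l⁻¹ := funext fun y => div_eq_mul_inv _ _
    rw [hfun]
    simp only [pd, fderiv_mul_const (hasD x).differentiableAt l⁻¹, (hasD x).fderiv,
      ContinuousLinearMap.smul_apply, smul_eq_mul]
    ring
  -- second derivatives of exp(S/l)
  have hC : ∀ i j, pd i (pd j (fun z => Real.exp (S t z / l))) x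
      = Real.exp (S t x / l) / l * pd i (S t) x / l * pd j (S t) x
        + Real.exp (S t x / l) / l * pd i (pd j (S t)) x := by
    intro i j
    have hfun : pd j (fun z => Real.exp (S t z / l))
        = fun y => (fun y => Real.exp (S t y / l) / l) y * (fun y => pd j (S t) y) y :=
      funext fun y => hB y j
    rw [hfun]
    have hu : DifferentiableAt ℝ (fun y => Real.exp (S t y / l) / l) x := by
      simpa [div_eq_mul_inv] using (hasD x).differentiableAt.mul_const l⁻¹
    have hv : DifferentiableAt ℝ (fun y => pd j (S t) y) x := (hadiff j) x
    have hm := fderiv_mul hu hv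
    simp only [pd] at hm ⊢
    rw [show (fun y => Real.exp (S t y / l) / l * (fderiv ℝ (S t) y) (Pi.single j 1)) = ((fun y => Real.exp (S t y / l) / l) * fun y => (fderiv ℝ (S t) y) (Pi.single j 1)) from rfl, hm]
    simp only [ContinuousLinearMap.add_apply, ContinuousLinearMap.smul_apply, smul_eq_mul]
    have e1 := hB' i
    simp only [pd] at e1
    rw [e1, show pd j (S t) = (fun y => fderiv ℝ (S t) y (Pi.single j 1)) from rfl]
    ring
  -- time derivative
  have hT : deriv (fun τ => Real.exp (S τ x / l)) t
      = Real.exp (S t x / l) * (deriv (fun τ => S τ x) t / l) := by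
    have hd : HasDerivAt (fun τ => S τ x) (deriv (fun τ => S τ x) t) t :=
      (((hSt x).differentiable one_ne_zero) t).hasDerivAt
    exact ((hd.div_const l).exp).deriv
  -- assemble
  have hgrad : (fun i => pd i (fun y => Real.exp (S t y / l)) x)
      = fun i => Real.exp (S t x / l) / l * pd i (S t) x := funext fun i => hB x i
  have hlogf : (fun j => pd j (fun y => Real.log (Real.exp (S t y / l))) x)
      = fun j => pd j (S t) x / l := funext fun j => hlog j
  simp only [hT, hgrad, hlogf, hC]
  have := aux_alg (Real.exp (S t x / l)) l (deriv (fun τ => S τ x) t) (q t x) hl0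
    (fun i => pd i (S t) x) (f t x) (g t x * (g t x).transpose) (Sig t x)
    (fun i j => pd i (pd j (S t)) x) (hHJB t ht x)
  convert this using 2
end

section
/- Let φ, φ̂ : [t₀,t₁] × ℝⁿ → ℝ be C^{1,2} with φ > 0, and set ρ := φ̂ φ. Suppose φ solves ∂φ/∂t + ⟨∇φ, f + f_φ⟩ + (1/2)⟨Σ, Hess φ⟩ − (q/λ + q_φ)φ = 0 and φ̂ solves ∂φ̂/∂t + ∇·(φ̂(f + f_φ)) − (1/2)Δ_Σ φ̂ + (q/λ + q_φ)φ̂ = 0, with f_φ := (λggᵀ − Σ)∇log φ, q_φ := (1/2)(∇log φ)ᵀ(λggᵀ − Σ)∇log φ. Then ρ solves the controlled Fokker-Planck equation ∂ρ/∂t + ∇·(ρ(f + ggᵀ∇(λ log φ))) = (1/2)Δ_Σ ρ. -/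
open scoped BigOperators Matrix

/-- The score `∇ log φ(t, ·)` at a point. -/
noncomputable def gradlog {n : ℕ} (φ : ℝ → (Fin n → ℝ) → ℝ) (t : ℝ) (y : Fin n → ℝ) :
    Fin n → ℝ :=
  fun j => pd j (fun z => Real.log (φ t z)) y

lemma pd_add {n} (i : Fin n) {a b : (Fin n → ℝ) → ℝ} {x} (ha : DifferentiableAt ℝ a x)
    (hb : DifferentiableAt ℝ b x) :
    pd i (fun y => a y + b y) x = pd i a x + pd i b x := by
  simp [pd, fderiv_fun_add ha hb]

lemma pd_mul {n} (i : Fin n) {a b : (Fin n → ℝ) → ℝ} {x} (ha : DifferentiableAt ℝ a x)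
    (hb : DifferentiableAt ℝ b x) :
    pd i (fun y => a y * b y) x = pd i a x * b x + a x * pd i b x := by
  simp [pd, fderiv_fun_mul ha hb]; ring

lemma pd_sum {n} (i : Fin n) {s : Finset (Fin n)} {F : Fin n → (Fin n → ℝ) → ℝ} {x}
    (hF : ∀ j, DifferentiableAt ℝ (F j) x) :
    pd i (fun y => ∑ j ∈ s, F j y) x = ∑ j ∈ s, pd i (F j) x := by
  classical
  induction s using Finset.induction with
  | empty => simp [pd]
  | insert _ _ hj ih =>
    rw [Finset.sum_insert hj, ← ih]
    rw [show (fun y => ∑ k ∈ insert _ _, F k y) = fun y => F _ y + ∑ k ∈ _, F k y from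
      funext fun y => Finset.sum_insert hj]
    exact pd_add i (hF _) (DifferentiableAt.fun_sum fun k _ => hF k)

lemma pd_log {n} (j : Fin n) {φ : (Fin n → ℝ) → ℝ} {x} (h : DifferentiableAt ℝ φ x)
    (hne : φ x ≠ 0) :
    pd j (fun z => Real.log (φ z)) x = pd j φ x / φ x := by
  have h1 := (Real.hasDerivAt_log hne).comp_hasFDerivAt x h.hasFDerivAt
  have h2 : HasFDerivAt (fun z => Real.log (φ z)) ((φ x)⁻¹ • fderiv ℝ φ x) x := h1
  rw [pd, h2.fderiv]
  simp [pd, div_eq_inv_mul]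

lemma contDiff_pd {n} (j : Fin n) {h : (Fin n → ℝ) → ℝ} (hh : ContDiff ℝ 2 h) :
    ContDiff ℝ 1 (fun x => pd j h x) := by
  have : ContDiff ℝ 1 (fderiv ℝ h) := hh.fderiv_right (by norm_num)
  exact this.clm_apply contDiff_const

/-- If the Schrödinger factors `(φ̂, φ)` solve the forward-backward
advection-diffusion-reaction PDEs, then `ρ = φ̂ φ` solves the controlled
Fokker-Planck equation with the optimal control `u = gᵀ∇(λ log φ)`. -/
theorem factors_solve_fokker_planck {n m : ℕ} (t₀ t₁ : ℝ)
    (φ φhat : ℝ → (Fin n → ℝ) → ℝ)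
    (f : ℝ → (Fin n → ℝ) → Fin n → ℝ)
    (g : ℝ → (Fin n → ℝ) → Matrix (Fin n) (Fin m) ℝ)
    (Sig : ℝ → (Fin n → ℝ) → Matrix (Fin n) (Fin n) ℝ)
    (q : ℝ → (Fin n → ℝ) → ℝ)
    (l : ℝ) (hl : 0 < l)
    (hφx : ∀ t, ContDiff ℝ 2 (φ t)) (hφt : ∀ x, ContDiff ℝ 1 (fun t => φ t x))
    (hφhatx : ∀ t, ContDiff ℝ 2 (φhat t)) (hφhatt : ∀ x, ContDiff ℝ 1 (fun t => φhat t x))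
    (hpos : ∀ t x, 0 < φ t x)
    (hfx : ∀ t i, ContDiff ℝ 1 (fun y => f t y i))
    (hgx : ∀ t i j, ContDiff ℝ 1 (fun y => g t y i j))
    (hSigx : ∀ t i j, ContDiff ℝ 2 (fun y => Sig t y i j))
    (hSigsym : ∀ t y, (Sig t y).IsSymm)
    -- backward PDE for φ
    (hφPDE : ∀ t ∈ Set.Icc t₀ t₁, ∀ x,
      deriv (fun τ => φ τ x) t
        + (fun i => pd i (φ t) x) ⬝ᵥ (fun i => f t x i +
            ((l • (g t x * (g t x).transpose) - Sig t x).mulVec (gradlog φ t x)) i)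
        + (1 / 2 : ℝ) * (∑ i, ∑ j, Sig t x i j * pd i (pd j (φ t)) x)
        - (q t x / l + (1 / 2 : ℝ) * (gradlog φ t x ⬝ᵥ
            (l • (g t x * (g t x).transpose) - Sig t x).mulVec (gradlog φ t x))) * φ t x
        = 0)
    -- forward PDE for φ̂
    (hφhatPDE : ∀ t ∈ Set.Icc t₀ t₁, ∀ x,
      deriv (fun τ => φhat τ x) t
        + (∑ i, pd i (fun y => φhat t y * (f t y i +
            ((l • (g t y * (g t y).transpose) - Sig t y).mulVec (gradlog φ t y)) i)) x)
        - (1 / 2 : ℝ) * (∑ i, ∑ j, pd i (pd j (fun y => Sig t y i j * φhat t y)) x)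
        + (q t x / l + (1 / 2 : ℝ) * (gradlog φ t x ⬝ᵥ
            (l • (g t x * (g t x).transpose) - Sig t x).mulVec (gradlog φ t x))) * φhat t x
        = 0) :
    -- conclusion: ρ := φ̂ φ solves the controlled Fokker-Planck equation
    ∀ t ∈ Set.Icc t₀ t₁, ∀ x,
      deriv (fun τ => φhat τ x * φ τ x) t
        + (∑ i, pd i (fun y => (φhat t y * φ t y) * (f t y i +
            ((g t y * (g t y).transpose).mulVec
              (fun j => pd j (fun z => l * Real.log (φ t z)) y)) i)) x)
        = (1 / 2 : ℝ) * (∑ i, ∑ j, pd i (pd j (fun y => Sig t y i j * (φhat t y * φ t y))) x) := by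
  intro t ht x
  have hΦ : ContDiff ℝ 2 (φ t) := hφx t
  have hΨ : ContDiff ℝ 2 (φhat t) := hφhatx t
  have one_le_two' : (1 : WithTop ℕ∞) ≤ 2 := by norm_num
  have hΦd : Differentiable ℝ (φ t) := (hΦ.of_le one_le_two').differentiable one_ne_zero
  have hΨd : Differentiable ℝ (φhat t) := (hΨ.of_le one_le_two').differentiable one_ne_zero
  have hne : ∀ y, φ t y ≠ 0 := fun y => (hpos t y).ne'
  -- score rewrites
  have hgl : ∀ y j, gradlog φ t y j = pd j (φ t) y / φ t y := fun y j =>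
    pd_log j (hΦd y) (hne y)
  have hgl_l : ∀ y (j : Fin n), pd j (fun z => l * Real.log (φ t z)) y
      = l * (pd j (φ t) y / φ t y) := by
    intro y j
    have hd : DifferentiableAt ℝ (fun z => Real.log (φ t z)) y := (hΦd y).log (hne y)
    have : pd j (fun z => l * Real.log (φ t z)) y
        = l * pd j (fun z => Real.log (φ t z)) y := by
      simp [pd, fderiv_const_mul hd]
    rw [this, pd_log j (hΦd y) (hne y)]
  -- C¹ facts
  have hpdφ : ∀ j : Fin n, ContDiff ℝ 1 (fun y => pd j (φ t) y) := fun j => contDiff_pd j hΦ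
  have hsc : ∀ j : Fin n, ContDiff ℝ 1 (fun y => pd j (φ t) y / φ t y) := fun j =>
    (hpdφ j).div (hΦ.of_le one_le_two') hne
  have hGC : ∀ i j : Fin n, ContDiff ℝ 2 (fun y => Sig t y i j * φhat t y) := fun i j =>
    (hSigx t i j).mul hΨ
  have hpdG : ∀ i j : Fin n, ContDiff ℝ 1 (fun y => pd j (fun z => Sig t z i j * φhat t z) y) :=
    fun i j => contDiff_pd j (hGC i j)
  -- b components explicit
  have hbeq : ∀ i : Fin n, (fun y => f t y i +
        ((l • (g t y * (g t y).transpose) - Sig t y).mulVec (gradlog φ t y)) i)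
      = fun y => f t y i + ∑ j, (l * (∑ k, g t y i k * g t y j k) - Sig t y i j)
          * (pd j (φ t) y / φ t y) := by
    intro i; funext y
    simp [Matrix.mulVec, dotProduct, Matrix.mul_apply, Matrix.sub_apply,
      Matrix.smul_apply, smul_eq_mul, hgl, Matrix.transpose_apply]
  have hbC : ∀ i : Fin n, ContDiff ℝ 1 (fun y => f t y i +
      ((l • (g t y * (g t y).transpose) - Sig t y).mulVec (gradlog φ t y)) i) := by
    intro i
    rw [hbeq i]
    exact (hfx t i).add (ContDiff.sum fun j _ =>
      ((contDiff_const.mul (ContDiff.sum fun k _ => (hgx t i k).mul (hgx t j k))).sub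
        ((hSigx t i j).of_le one_le_two')).mul (hsc j))
  have hΨbC : ∀ i : Fin n, ContDiff ℝ 1 (fun y => φhat t y * (f t y i +
      ((l • (g t y * (g t y).transpose) - Sig t y).mulVec (gradlog φ t y)) i)) := fun i =>
    (hΨ.of_le one_le_two').mul (hbC i)
  -- time derivative product rule
  have h_deriv : deriv (fun τ => φhat τ x * φ τ x) t
      = deriv (fun τ => φhat τ x) t * φ t x + φhat t x * deriv (fun τ => φ τ x) t :=
    deriv_fun_mul (((hφhatt x).differentiable one_ne_zero) t) (((hφt x).differentiable one_ne_zero) t)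
  have hI : ∀ i : Fin n, (fun y => (φhat t y * φ t y) * (f t y i +
        ((g t y * (g t y).transpose).mulVec
          (fun j => pd j (fun z => l * Real.log (φ t z)) y)) i))
      = fun y => (φhat t y * (f t y i +
          ((l • (g t y * (g t y).transpose) - Sig t y).mulVec (gradlog φ t y)) i)) * φ t y
        + ∑ j, (Sig t y i j * φhat t y) * pd j (φ t) y := by
    intro i; funext y
    simp only [Matrix.mulVec, dotProduct, Matrix.smul_apply, Matrix.sub_apply,
      smul_eq_mul, hgl, hgl_l]
    have key : ∀ j : Fin n, φhat t y * φ t y * ((g t y * (g t y)ᵀ) i j * (l * (pd j (φ t) y / φ t y)))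
        = φhat t y * ((l * (g t y * (g t y)ᵀ) i j - Sig t y i j) * (pd j (φ t) y / φ t y)) * φ t y
          + Sig t y i j * φhat t y * pd j (φ t) y := by
      intro j; field_simp [hne y]; ring
    calc φhat t y * φ t y * (f t y i + ∑ j : Fin n, (g t y * (g t y)ᵀ) i j * (l * (pd j (φ t) y / φ t y)))
        = φhat t y * φ t y * f t y i
          + ∑ j : Fin n, φhat t y * φ t y * ((g t y * (g t y)ᵀ) i j * (l * (pd j (φ t) y / φ t y))) := by
          rw [mul_add, Finset.mul_sum]
      _ = φhat t y * φ t y * f t y i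
          + ∑ j : Fin n, (φhat t y * ((l * (g t y * (g t y)ᵀ) i j - Sig t y i j) * (pd j (φ t) y / φ t y)) * φ t y
            + Sig t y i j * φhat t y * pd j (φ t) y) := by
          rw [Finset.sum_congr rfl fun j _ => key j]
      _ = φhat t y * (f t y i + ∑ j : Fin n, (l * (g t y * (g t y)ᵀ) i j - Sig t y i j) * (pd j (φ t) y / φ t y)) * φ t y
          + ∑ j : Fin n, Sig t y i j * φhat t y * pd j (φ t) y := by
          rw [Finset.sum_add_distrib, mul_add, add_mul, Finset.mul_sum, Finset.sum_mul]
          ring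
  -- differentiability at points
  have hΨbD : ∀ i : Fin n, Differentiable ℝ (fun y => φhat t y * (f t y i +
      ((l • (g t y * (g t y).transpose) - Sig t y).mulVec (gradlog φ t y)) i)) := fun i =>
    (hΨbC i).differentiable one_ne_zero
  have hpdφD : ∀ j : Fin n, Differentiable ℝ (fun y => pd j (φ t) y) := fun j =>
    (hpdφ j).differentiable one_ne_zero
  have hGD : ∀ i j : Fin n, Differentiable ℝ (fun y => Sig t y i j * φhat t y) := fun i j =>
    ((hGC i j).of_le one_le_two').differentiable one_ne_zero
  have hpdGD : ∀ i j : Fin n,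
      Differentiable ℝ (fun y => pd j (fun z => Sig t z i j * φhat t z) y) :=
    fun i j => (hpdG i j).differentiable one_ne_zero
  -- divergence term expansion
  have hLdiv : (∑ i, pd i (fun y => (φhat t y * φ t y) * (f t y i +
        ((g t y * (g t y).transpose).mulVec
          (fun j => pd j (fun z => l * Real.log (φ t z)) y)) i)) x)
      = ∑ i : Fin n, (pd i (fun y => φhat t y * (f t y i +
            ((l • (g t y * (g t y).transpose) - Sig t y).mulVec (gradlog φ t y)) i)) x * φ t x
          + (φhat t x * (f t x i +
            ((l • (g t x * (g t x).transpose) - Sig t x).mulVec (gradlog φ t x)) i)) * pd i (φ t) x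
          + ∑ j : Fin n, (pd i (fun z => Sig t z i j * φhat t z) x * pd j (φ t) x
              + (Sig t x i j * φhat t x) * pd i (pd j (φ t)) x)) := by
    refine Finset.sum_congr rfl fun i _ => ?_
    rw [hI i]
    rw [pd_add i (((hΨbD i).fun_mul hΦd) x)
      (DifferentiableAt.fun_sum fun j _ => ((hGD i j x).fun_mul (hpdφD j x)))]
    rw [pd_mul i (hΨbD i x) (hΦd x)]
    rw [pd_sum i (fun j => ((hGD i j).fun_mul (hpdφD j)) x)]
    rw [Finset.sum_congr rfl fun j (_ : j ∈ Finset.univ) => pd_mul i (hGD i j x) (hpdφD j x)]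
  -- RHS expansion
  have hR : ∀ i j : Fin n, pd i (pd j (fun y => Sig t y i j * (φhat t y * φ t y))) x
      = pd i (pd j (fun z => Sig t z i j * φhat t z)) x * φ t x
        + pd j (fun z => Sig t z i j * φhat t z) x * pd i (φ t) x
        + pd i (fun z => Sig t z i j * φhat t z) x * pd j (φ t) x
        + (Sig t x i j * φhat t x) * pd i (pd j (φ t)) x := by
    intro i j
    have e1 : (fun y => Sig t y i j * (φhat t y * φ t y))
        = fun y => (Sig t y i j * φhat t y) * φ t y := funext fun y => (mul_assoc _ _ _).symm
    rw [e1]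
    have e2 : pd j (fun y => (Sig t y i j * φhat t y) * φ t y)
        = fun y => pd j (fun z => Sig t z i j * φhat t z) y * φ t y
            + (Sig t y i j * φhat t y) * pd j (φ t) y :=
      funext fun y => pd_mul j (hGD i j y) (hΦd y)
    rw [e2]
    rw [pd_add i (((hpdGD i j).fun_mul hΦd) x) (((hGD i j).fun_mul (hpdφD j)) x)]
    rw [pd_mul i (hpdGD i j x) (hΦd x), pd_mul i (hGD i j x) (hpdφD j x)]
    ring
  -- symmetric cross-term identity
  have hcross : (∑ i : Fin n, ∑ j : Fin n, pd j (fun z => Sig t z i j * φhat t z) x * pd i (φ t) x)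
      = ∑ i : Fin n, ∑ j : Fin n, pd i (fun z => Sig t z i j * φhat t z) x * pd j (φ t) x := by
    rw [Finset.sum_comm]
    refine Finset.sum_congr rfl fun a _ => Finset.sum_congr rfl fun b _ => ?_
    have e : (fun z => Sig t z b a * φhat t z) = fun z => Sig t z a b * φhat t z :=
      funext fun z => by rw [(hSigsym t z).apply a b]
    rw [e]
  -- pull out φhat from the Hessian-of-φ term
  have e4 : (∑ i : Fin n, ∑ j : Fin n, (Sig t x i j * φhat t x) * pd i (pd j (φ t)) x)
      = φhat t x * ∑ i : Fin n, ∑ j : Fin n, Sig t x i j * pd i (pd j (φ t)) x := by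
    rw [Finset.mul_sum]
    refine Finset.sum_congr rfl fun i _ => ?_
    rw [Finset.mul_sum]
    exact Finset.sum_congr rfl fun j _ => by ring
  have hRsum : (∑ i : Fin n, ∑ j : Fin n, pd i (pd j (fun y => Sig t y i j * (φhat t y * φ t y))) x)
      = (∑ i : Fin n, ∑ j : Fin n, pd i (pd j (fun y => Sig t y i j * φhat t y)) x) * φ t x
        + (∑ i : Fin n, ∑ j : Fin n, pd i (fun z => Sig t z i j * φhat t z) x * pd j (φ t) x)
        + (∑ i : Fin n, ∑ j : Fin n, pd i (fun z => Sig t z i j * φhat t z) x * pd j (φ t) x)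
        + φhat t x * ∑ i : Fin n, ∑ j : Fin n, Sig t x i j * pd i (pd j (φ t)) x := by
    rw [Finset.sum_congr rfl fun i (_ : i ∈ Finset.univ) =>
      Finset.sum_congr rfl fun j (_ : j ∈ Finset.univ) => hR i j]
    simp only [Finset.sum_add_distrib]
    rw [hcross, e4]
    congr 1
    · congr 2
      rw [Finset.sum_mul]
      exact Finset.sum_congr rfl fun i _ => by rw [Finset.sum_mul]
  have eQ : (∑ i : Fin n, (φhat t x * (f t x i +
        ((l • (g t x * (g t x).transpose) - Sig t x).mulVec (gradlog φ t x)) i)) * pd i (φ t) x)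
      = φhat t x * ∑ i : Fin n, pd i (φ t) x * (f t x i +
        ((l • (g t x * (g t x).transpose) - Sig t x).mulVec (gradlog φ t x)) i) := by
    rw [Finset.mul_sum]
    exact Finset.sum_congr rfl fun i _ => by ring
  have H1 := hφPDE t ht x
  have H2 := hφhatPDE t ht x
  simp only [dotProduct] at H1 H2
  rw [h_deriv, hLdiv, hRsum]
  simp only [Finset.sum_add_distrib]
  rw [e4, eQ, ← Finset.sum_mul]
  linear_combination (φ t x) * H2 + (φhat t x) * H1
end
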